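/- Let η_a, ρ_a, η_b, ρ_b be distributions on {0,...,k−1} with d_TV(η_a,ρ_a) ≤ δ and d_TV(η_b,ρ_b) ≤ δ. Then |ε*(η_a,η_b) − ε*(ρ_a,ρ_b)| ≤ 2δ, where ε* denotes the minimum median width. -/
import Mathlib


open Finset

def IsDist (k : ℕ) (p : Fin k → ℝ) : Prop :=
  (∀ x, 0 ≤ p x) ∧ ∑ x, p x = 1

def IsJoint (k : ℕ) (η : Fin k → Fin k → ℝ) : Prop :=
  (∀ x y, 0 ≤ η x y) ∧ ∑ x, ∑ y, η x y = 1

def margA (k : ℕ) (η : Fin k → Fin k → ℝ) (x : Fin k) : ℝ := ∑ y, η x y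

def margB (k : ℕ) (η : Fin k → Fin k → ℝ) (y : Fin k) : ℝ := ∑ x, η x y

noncomputable def qLow (k : ℕ) (r : ℝ) (η : Fin k → Fin k → ℝ) : ℝ :=
  ∑ x : Fin k, ∑ y : Fin k, if ((x : ℕ) : ℝ) - ((y : ℕ) : ℝ) < r then η x y else 0

noncomputable def qUp (k : ℕ) (r : ℝ) (η : Fin k → Fin k → ℝ) : ℝ :=
  ∑ x : Fin k, ∑ y : Fin k, if ((x : ℕ) : ℝ) - ((y : ℕ) : ℝ) ≤ r then η x y else 0

noncomputable def ate (k : ℕ) (η : Fin k → Fin k → ℝ) : ℝ :=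
  ∑ x : Fin k, ∑ y : Fin k, (((x : ℕ) : ℝ) - ((y : ℕ) : ℝ)) * η x y

noncomputable def nuL (k : ℕ) (r : ℝ) (ηa ηb : Fin k → ℝ) : ℝ :=
  sSup {v | ∃ η, IsJoint k η ∧ margA k η = ηa ∧ margB k η = ηb ∧ v = qLow k r η}

noncomputable def nuU (k : ℕ) (r : ℝ) (ηa ηb : Fin k → ℝ) : ℝ :=
  sInf {v | ∃ η, IsJoint k η ∧ margA k η = ηa ∧ margB k η = ηb ∧ v = qUp k r η}

noncomputable def widthOf (k : ℕ) (r : ℝ) (ηa ηb : Fin k → ℝ) : ℝ :=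
  max (max (nuL k r ηa ηb - 1/2) 0) (max (1/2 - nuU k r ηa ηb) 0)

noncomputable def epsStar (k : ℕ) (ηa ηb : Fin k → ℝ) : ℝ :=
  sInf {e | ∃ r : ℤ, -((k : ℤ) - 1) ≤ r ∧ r ≤ (k : ℤ) - 1 ∧ e = widthOf k (r : ℝ) ηa ηb}

noncomputable def dTV (k : ℕ) (p q : Fin k → ℝ) : ℝ := (1/2) * ∑ x, |p x - q x|

noncomputable def dTV2 (k : ℕ) (η ρ : Fin k → Fin k → ℝ) : ℝ :=
  (1/2) * ∑ x, ∑ y, |η x y - ρ x y|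
section Aux
variable {α β γ δ : Type*} [Fintype α] [Fintype β] [Fintype γ] [Fintype δ]
variable {M : Type*} [AddCommMonoid M]

lemma sum3_comm (f : α → β → γ → M) :
    ∑ c, ∑ a, ∑ b, f a b c = ∑ a, ∑ b, ∑ c, f a b c := by
  calc ∑ c, ∑ a, ∑ b, f a b c = ∑ a, ∑ c, ∑ b, f a b c := Finset.sum_comm
    _ = ∑ a, ∑ b, ∑ c, f a b c := Finset.sum_congr rfl fun a _ => Finset.sum_comm

lemma sum4_comm (f : α → β → γ → δ → M) :
    ∑ c, ∑ d, ∑ a, ∑ b, f a b c d = ∑ a, ∑ b, ∑ c, ∑ d, f a b c d := by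
  calc ∑ c, ∑ d, ∑ a, ∑ b, f a b c d
      = ∑ c, ∑ a, ∑ d, ∑ b, f a b c d :=
        Finset.sum_congr rfl fun c _ => Finset.sum_comm
    _ = ∑ a, ∑ c, ∑ d, ∑ b, f a b c d := Finset.sum_comm
    _ = ∑ a, ∑ c, ∑ b, ∑ d, f a b c d :=
        Finset.sum_congr rfl fun a _ => Finset.sum_congr rfl fun c _ => Finset.sum_comm
    _ = ∑ a, ∑ b, ∑ c, ∑ d, f a b c d :=
        Finset.sum_congr rfl fun a _ => Finset.sum_comm

lemma abs_sum4 (f : α → β → γ → δ → ℝ) :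
    |∑ a, ∑ b, ∑ c, ∑ d, f a b c d| ≤ ∑ a, ∑ b, ∑ c, ∑ d, |f a b c d| := by
  refine (Finset.abs_sum_le_sum_abs _ _).trans (Finset.sum_le_sum fun a _ => ?_)
  refine (Finset.abs_sum_le_sum_abs _ _).trans (Finset.sum_le_sum fun b _ => ?_)
  refine (Finset.abs_sum_le_sum_abs _ _).trans (Finset.sum_le_sum fun c _ => ?_)
  exact Finset.abs_sum_le_sum_abs _ _

end Aux

lemma dTV_nonneg (k : ℕ) (p q : Fin k → ℝ) : 0 ≤ dTV k p q := by
  unfold dTV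
  have : (0:ℝ) ≤ ∑ x, |p x - q x| := Finset.sum_nonneg fun x _ => abs_nonneg _
  linarith

lemma dTV_symm (k : ℕ) (p q : Fin k → ℝ) : dTV k p q = dTV k q p := by
  unfold dTV
  congr 1
  exact Finset.sum_congr rfl fun x _ => abs_sub_comm _ _

lemma coupling_exists (k : ℕ) (p q : Fin k → ℝ) (hp : IsDist k p) (hq : IsDist k q) :
    ∃ γ : Fin k → Fin k → ℝ, (∀ x x', 0 ≤ γ x x') ∧ (∀ x, ∑ x', γ x x' = p x) ∧
      (∀ x', ∑ x, γ x x' = q x') ∧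
      (∑ x, ∑ x', if x = x' then (0:ℝ) else γ x x') ≤ dTV k p q := by
  classical
  obtain ⟨hp0, hp1⟩ := hp
  obtain ⟨hq0, hq1⟩ := hq
  set m : Fin k → ℝ := fun x => min (p x) (q x) with hm
  set s : ℝ := ∑ x, (p x - m x) with hs
  have hms : ∀ x, m x ≤ p x := fun x => min_le_left _ _
  have hmsq : ∀ x, m x ≤ q x := fun x => min_le_right _ _
  have hm0 : ∀ x, 0 ≤ m x := fun x => le_min (hp0 x) (hq0 x)
  have hs0 : 0 ≤ s := Finset.sum_nonneg fun x _ => by linarith [hms x]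
  have hsq : ∑ x, (q x - m x) = s := by
    rw [hs, Finset.sum_sub_distrib, Finset.sum_sub_distrib, hp1, hq1]
  have habs : ∀ x, |p x - q x| = (p x - m x) + (q x - m x) := by
    intro x
    rcases le_total (p x) (q x) with h | h
    · rw [abs_of_nonpos (by linarith), hm]; simp only [min_eq_left h]; ring
    · rw [abs_of_nonneg (by linarith), hm]; simp only [min_eq_right h]; ring
  have hdtv : dTV k p q = s := by
    unfold dTV
    rw [Finset.sum_congr rfl fun x _ => habs x, Finset.sum_add_distrib, ← hs, hsq]
    ring
  by_cases hz : s = 0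
  · have hpm : ∀ x, p x = m x := by
      intro x
      have h0 : ∑ x, (p x - m x) = 0 := by rw [← hs, hz]
      have := (Finset.sum_eq_zero_iff_of_nonneg
        (fun x _ => by linarith [hms x])).mp h0 x (Finset.mem_univ x)
      linarith
    have hqm : ∀ x, q x = m x := by
      intro x
      have h0 : ∑ x, (q x - m x) = 0 := by rw [hsq, hz]
      have := (Finset.sum_eq_zero_iff_of_nonneg
        (fun x _ => by linarith [hmsq x])).mp h0 x (Finset.mem_univ x)
      linarith
    refine ⟨fun x x' => if x = x' then p x else 0, ?_, ?_, ?_, ?_⟩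
    · intro x x'; dsimp only; split <;> simp [hp0]
    · intro x; simp
    · intro x'
      dsimp only
      rw [Finset.sum_ite_eq' Finset.univ x' (fun x => p x)]
      simp [hpm x', hqm x']
    · have : ∀ x, ∑ x', (if x = x' then (0:ℝ) else if x = x' then p x else 0) = 0 := by
        intro x
        apply Finset.sum_eq_zero
        intro x' _
        split <;> simp
      rw [Finset.sum_congr rfl fun x _ => this x]
      simp [dTV_nonneg k p q]
  · have hspos : 0 < s := lt_of_le_of_ne hs0 (Ne.symm hz)
    refine ⟨fun x x' => (if x = x' then m x else 0) + (p x - m x) * (q x' - m x') / s,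
      ?_, ?_, ?_, ?_⟩
    · intro x x'
      have h1 : (0:ℝ) ≤ (if x = x' then m x else 0) := by split <;> simp [hm0]
      have h2 : (0:ℝ) ≤ (p x - m x) * (q x' - m x') / s :=
        div_nonneg (mul_nonneg (by linarith [hms x]) (by linarith [hmsq x'])) hs0
      linarith
    · intro x
      rw [Finset.sum_add_distrib]
      have e1 : ∑ x', (if x = x' then m x else 0) = m x := by
        rw [Finset.sum_ite_eq Finset.univ x (fun _ => m x)]; simp
      have e2 : ∑ x', (p x - m x) * (q x' - m x') / s = p x - m x := by
        rw [← Finset.sum_div, ← Finset.mul_sum, hsq]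
        field_simp
      rw [e1, e2]; ring
    · intro x'
      rw [Finset.sum_add_distrib]
      have e1 : ∑ x, (if x = x' then m x else 0) = m x' := by
        rw [Finset.sum_ite_eq' Finset.univ x' (fun x => m x)]; simp
      have e2 : ∑ x, (p x - m x) * (q x' - m x') / s = q x' - m x' := by
        rw [← Finset.sum_div]
        rw [← Finset.sum_mul, ← hs]
        field_simp
      rw [e1, e2]; ring
    · rw [hdtv]
      have hb : ∀ x x', (if x = x' then (0:ℝ) else
          (if x = x' then m x else 0) + (p x - m x) * (q x' - m x') / s)
          ≤ (p x - m x) * (q x' - m x') / s := by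
        intro x x'
        split
        · exact div_nonneg (mul_nonneg (by linarith [hms x]) (by linarith [hmsq x'])) hs0
        · simp
      calc (∑ x, ∑ x', if x = x' then (0:ℝ) else
            (if x = x' then m x else 0) + (p x - m x) * (q x' - m x') / s)
          ≤ ∑ x, ∑ x', (p x - m x) * (q x' - m x') / s :=
            Finset.sum_le_sum fun x _ => Finset.sum_le_sum fun x' _ => hb x x'
        _ = s := by
            rw [Finset.sum_congr rfl fun x _ => by
              rw [← Finset.sum_div, ← Finset.mul_sum, hsq]]
            rw [← Finset.sum_div, ← Finset.sum_mul, ← hs]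
            field_simp
lemma transport (k : ℕ) (η : Fin k → Fin k → ℝ) (hη : IsJoint k η)
    (ηa ηb ρa ρb : Fin k → ℝ) (γa γb : Fin k → Fin k → ℝ)
    (hma : margA k η = ηa) (hmb : margB k η = ηb)
    (hga0 : ∀ x x', 0 ≤ γa x x') (hgar : ∀ x, ∑ x', γa x x' = ηa x)
    (hgac : ∀ x', ∑ x, γa x x' = ρa x')
    (hgb0 : ∀ y y', 0 ≤ γb y y') (hgbr : ∀ y, ∑ y', γb y y' = ηb y)
    (hgbc : ∀ y', ∑ y, γb y y' = ρb y') :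
    ∃ ρ : Fin k → Fin k → ℝ, IsJoint k ρ ∧ margA k ρ = ρa ∧ margB k ρ = ρb ∧
      ∀ (P : Fin k → Fin k → Prop) (inst : ∀ x y, Decidable (P x y)),
        |(∑ x, ∑ y, if P x y then ρ x y else 0) - (∑ x, ∑ y, if P x y then η x y else 0)| ≤
          (∑ x, ∑ x', if x = x' then (0:ℝ) else γa x x') +
          (∑ y, ∑ y', if y = y' then (0:ℝ) else γb y y') := by
  classical
  obtain ⟨hη0, hη1⟩ := hη
  have hmaa : ∀ x, ∑ y, η x y = ηa x := fun x => congrFun hma x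
  have hmbb : ∀ y, ∑ x, η x y = ηb y := fun y => congrFun hmb y
  have hηa0 : ∀ x, 0 ≤ ηa x := fun x => (hgar x) ▸ Finset.sum_nonneg fun x' _ => hga0 x x'
  have hηb0 : ∀ y, 0 ≤ ηb y := fun y => (hgbr y) ▸ Finset.sum_nonneg fun y' _ => hgb0 y y'
  have hza : ∀ x, ηa x = 0 → ∀ y, η x y = 0 := by
    intro x hx y
    have h0 : ∑ y, η x y = 0 := by rw [hmaa x, hx]
    exact (Finset.sum_eq_zero_iff_of_nonneg (fun y _ => hη0 x y)).mp h0 y (Finset.mem_univ y)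
  have hzb : ∀ y, ηb y = 0 → ∀ x, η x y = 0 := by
    intro y hy x
    have h0 : ∑ x, η x y = 0 := by rw [hmbb y, hy]
    exact (Finset.sum_eq_zero_iff_of_nonneg (fun x _ => hη0 x y)).mp h0 x (Finset.mem_univ x)
  have hzga : ∀ x, ηa x = 0 → ∀ x', γa x x' = 0 := by
    intro x hx x'
    have h0 : ∑ x', γa x x' = 0 := by rw [hgar x, hx]
    exact (Finset.sum_eq_zero_iff_of_nonneg (fun x' _ => hga0 x x')).mp h0 x' (Finset.mem_univ x')
  have hzgb : ∀ y, ηb y = 0 → ∀ y', γb y y' = 0 := by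
    intro y hy y'
    have h0 : ∑ y', γb y y' = 0 := by rw [hgbr y, hy]
    exact (Finset.sum_eq_zero_iff_of_nonneg (fun y' _ => hgb0 y y')).mp h0 y' (Finset.mem_univ y')
  set w : Fin k → Fin k → Fin k → Fin k → ℝ :=
    fun x y x' y' => η x y * (γa x x' / ηa x) * (γb y y' / ηb y) with hw
  have hw0 : ∀ x y x' y', 0 ≤ w x y x' y' := by
    intro x y x' y'
    exact mul_nonneg (mul_nonneg (hη0 x y) (div_nonneg (hga0 x x') (hηa0 x)))
      (div_nonneg (hgb0 y y') (hηb0 y))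
  -- c1 : sum over y'
  have c1 : ∀ x y x', ∑ y', w x y x' y' = η x y * (γa x x' / ηa x) := by
    intro x y x'
    by_cases hb : ηb y = 0
    · simp [hw, hzb y hb x]
    · rw [hw]
      dsimp only
      rw [← Finset.mul_sum, ← Finset.sum_div, hgbr, div_self hb, mul_one]
  -- c2 : collapse over y
  have c2 : ∀ x x', ∑ y, η x y * (γa x x' / ηa x) = γa x x' := by
    intro x x'
    by_cases ha : ηa x = 0
    · simp [hza x ha, hzga x ha x']
    · rw [← Finset.sum_mul, hmaa x, mul_div_assoc']
      field_simp
  -- c1' : sum over x'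
  have c1' : ∀ x y y', ∑ x', w x y x' y' = η x y * (γb y y' / ηb y) := by
    intro x y y'
    by_cases ha : ηa x = 0
    · simp [hw, hza x ha y]
    · have : ∀ x', w x y x' y' = (η x y * (γb y y' / ηb y) / ηa x) * γa x x' := by
        intro x'; rw [hw]; dsimp only; field_simp; try ring
      rw [Finset.sum_congr rfl fun x' _ => this x', ← Finset.mul_sum, hgar,
        div_mul_cancel₀ _ ha]
  -- c2' : collapse over x
  have c2' : ∀ y y', ∑ x, η x y * (γb y y' / ηb y) = γb y y' := by
    intro y y'
    by_cases hb : ηb y = 0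
    · simp [hzb y hb, hzgb y hb y']
    · rw [← Finset.sum_mul, hmbb y, mul_div_assoc']
      field_simp
  -- c3 : total over x', y'
  have c3 : ∀ x y, ∑ x', ∑ y', w x y x' y' = η x y := by
    intro x y
    rw [Finset.sum_congr rfl fun x' _ => c1 x y x']
    by_cases ha : ηa x = 0
    · simp [hza x ha y]
    · have : ∀ x', η x y * (γa x x' / ηa x) = (η x y / ηa x) * γa x x' := by
        intro x'; field_simp; try ring
      rw [Finset.sum_congr rfl fun x' _ => this x', ← Finset.mul_sum, hgar,
        div_mul_cancel₀ _ ha]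
  refine ⟨fun x' y' => ∑ x, ∑ y, w x y x' y', ⟨?_, ?_⟩, ?_, ?_, ?_⟩
  · intro x' y'
    exact Finset.sum_nonneg fun x _ => Finset.sum_nonneg fun y _ => hw0 x y x' y'
  · -- total mass
    rw [sum4_comm (fun x y x' y' => w x y x' y')]
    rw [Finset.sum_congr rfl fun x _ => Finset.sum_congr rfl fun y _ => c3 x y]
    exact hη1
  · -- margA
    funext x'
    show ∑ y', ∑ x, ∑ y, w x y x' y' = ρa x'
    rw [sum3_comm (fun x y y' => w x y x' y')]
    rw [Finset.sum_congr rfl fun x _ => Finset.sum_congr rfl fun y _ => c1 x y x']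
    rw [Finset.sum_congr rfl fun x _ => c2 x x']
    exact hgac x'
  · -- margB
    funext y'
    show ∑ x', ∑ x, ∑ y, w x y x' y' = ρb y'
    rw [sum3_comm (fun x y x' => w x y x' y')]
    rw [Finset.sum_congr rfl fun x _ => Finset.sum_congr rfl fun y _ => c1' x y y']
    rw [Finset.sum_comm]
    rw [Finset.sum_congr rfl fun y _ => c2' y y']
    exact hgbc y'
  · intro P inst
    dsimp only
    have pushr : (∑ x', ∑ y', if P x' y' then (∑ x, ∑ y, w x y x' y') else 0)
        = ∑ x, ∑ y, ∑ x', ∑ y', (if P x' y' then w x y x' y' else 0) := by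
      rw [← sum4_comm (fun x y x' y' => if P x' y' then w x y x' y' else 0)]
      refine Finset.sum_congr rfl fun x' _ => Finset.sum_congr rfl fun y' _ => ?_
      split <;> simp
    have pushe : (∑ x, ∑ y, if P x y then η x y else 0)
        = ∑ x, ∑ y, ∑ x', ∑ y', (if P x y then w x y x' y' else 0) := by
      refine Finset.sum_congr rfl fun x _ => Finset.sum_congr rfl fun y _ => ?_
      split
      · exact (c3 _ _).symm
      · simp
    rw [pushr, pushe]
    simp only [← Finset.sum_sub_distrib]
    have key : ∀ x y x' y',
        |(if P x' y' then w x y x' y' else 0) - (if P x y then w x y x' y' else 0)|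
        ≤ (if x = x' then 0 else w x y x' y') + (if y = y' then 0 else w x y x' y') := by
      intro x y x' y'
      have w0 := hw0 x y x' y'
      have hcases : |(if P x' y' then w x y x' y' else 0) -
          (if P x y then w x y x' y' else 0)| ≤ w x y x' y' := by
        split_ifs <;> simp [abs_of_nonneg, w0]
      have hb1 : (0:ℝ) ≤ (if x = x' then (0:ℝ) else w x y x' y') := by split <;> simp [w0]
      have hb2 : (0:ℝ) ≤ (if y = y' then (0:ℝ) else w x y x' y') := by split <;> simp [w0]
      by_cases hx : x = x'
      · by_cases hy : y = y'
        · subst hx; subst hy; simp [hb1, hb2]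
        · refine hcases.trans ?_
          rw [if_neg hy]
          linarith
      · refine hcases.trans ?_
        rw [if_neg hx]
        linarith
    refine le_trans (abs_sum4 _) ?_
    refine le_trans (Finset.sum_le_sum fun x _ => Finset.sum_le_sum fun y _ =>
      Finset.sum_le_sum fun x' _ => Finset.sum_le_sum fun y' _ => key x y x' y') ?_
    simp only [Finset.sum_add_distrib]
    have hA : ∑ x, ∑ y, ∑ x', ∑ y', (if x = x' then (0:ℝ) else w x y x' y')
        = ∑ x, ∑ x', if x = x' then (0:ℝ) else γa x x' := by
      refine Finset.sum_congr rfl fun x _ => ?_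
      rw [Finset.sum_comm]
      refine Finset.sum_congr rfl fun x' _ => ?_
      by_cases h : x = x'
      · simp [h]
      · simp only [if_neg h]
        rw [Finset.sum_congr rfl fun y _ => c1 x y x', c2 x x']
    have hB : ∑ x, ∑ y, ∑ x', ∑ y', (if y = y' then (0:ℝ) else w x y x' y')
        = ∑ y, ∑ y', if y = y' then (0:ℝ) else γb y y' := by
      have step1 : ∀ x y, ∑ x', ∑ y', (if y = y' then (0:ℝ) else w x y x' y')
          = ∑ y', (if y = y' then (0:ℝ) else η x y * (γb y y' / ηb y)) := by
        intro x y
        rw [Finset.sum_comm]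
        refine Finset.sum_congr rfl fun y' _ => ?_
        by_cases h : y = y'
        · simp [h]
        · simp only [if_neg h]
          exact c1' x y y'
      rw [Finset.sum_congr rfl fun x _ => Finset.sum_congr rfl fun y _ => step1 x y]
      rw [sum3_comm (fun y y' x => if y = y' then (0:ℝ) else η x y * (γb y y' / ηb y))]
      refine Finset.sum_congr rfl fun y _ => Finset.sum_congr rfl fun y' _ => ?_
      by_cases h : y = y'
      · simp [h]
      · simp only [if_neg h]
        exact c2' y y'
    rw [hA, hB]
lemma indep_joint (k : ℕ) (a b : Fin k → ℝ) (ha : IsDist k a) (hb : IsDist k b) :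
    ∃ η, IsJoint k η ∧ margA k η = a ∧ margB k η = b := by
  refine ⟨fun x y => a x * b y, ⟨fun x y => mul_nonneg (ha.1 x) (hb.1 y), ?_⟩, ?_, ?_⟩
  · rw [Finset.sum_congr rfl fun x _ => by rw [← Finset.mul_sum, hb.2, mul_one], ha.2]
  · funext x
    show ∑ y, a x * b y = a x
    rw [← Finset.mul_sum, hb.2, mul_one]
  · funext y
    show ∑ x, a x * b y = b y
    rw [← Finset.sum_mul, ha.2, one_mul]

lemma qLow_nonneg (k : ℕ) (r : ℝ) (η : Fin k → Fin k → ℝ) (hη : IsJoint k η) :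
    0 ≤ qLow k r η := by
  unfold qLow
  refine Finset.sum_nonneg fun x _ => Finset.sum_nonneg fun y _ => ?_
  split
  · exact hη.1 x y
  · exact le_rfl

lemma qLow_le_one (k : ℕ) (r : ℝ) (η : Fin k → Fin k → ℝ) (hη : IsJoint k η) :
    qLow k r η ≤ 1 := by
  unfold qLow
  rw [← hη.2]
  refine Finset.sum_le_sum fun x _ => Finset.sum_le_sum fun y _ => ?_
  split
  · exact le_rfl
  · exact hη.1 x y

lemma qUp_nonneg (k : ℕ) (r : ℝ) (η : Fin k → Fin k → ℝ) (hη : IsJoint k η) :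
    0 ≤ qUp k r η := by
  unfold qUp
  refine Finset.sum_nonneg fun x _ => Finset.sum_nonneg fun y _ => ?_
  split
  · exact hη.1 x y
  · exact le_rfl

lemma SL_bddAbove (k : ℕ) (r : ℝ) (a b : Fin k → ℝ) :
    BddAbove {v | ∃ η, IsJoint k η ∧ margA k η = a ∧ margB k η = b ∧ v = qLow k r η} := by
  refine ⟨1, fun v hv => ?_⟩
  obtain ⟨η, hη, _, _, rfl⟩ := hv
  exact qLow_le_one k r η hη

lemma SU_bddBelow (k : ℕ) (r : ℝ) (a b : Fin k → ℝ) :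
    BddBelow {v | ∃ η, IsJoint k η ∧ margA k η = a ∧ margB k η = b ∧ v = qUp k r η} := by
  refine ⟨0, fun v hv => ?_⟩
  obtain ⟨η, hη, _, _, rfl⟩ := hv
  exact qUp_nonneg k r η hη

lemma nuL_nonneg (k : ℕ) (r : ℝ) (a b : Fin k → ℝ) (ha : IsDist k a) (hb : IsDist k b) :
    0 ≤ nuL k r a b := by
  obtain ⟨η, hη, hA, hB⟩ := indep_joint k a b ha hb
  exact le_trans (qLow_nonneg k r η hη)
    (le_csSup (SL_bddAbove k r a b) ⟨η, hη, hA, hB, rfl⟩)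

lemma nuL_one_sided (k : ℕ) (r : ℝ) (ηa ηb ρa ρb : Fin k → ℝ)
    (h1 : IsDist k ηa) (h2 : IsDist k ρa) (h3 : IsDist k ηb) (h4 : IsDist k ρb) :
    nuL k r ηa ηb ≤ nuL k r ρa ρb + (dTV k ηa ρa + dTV k ηb ρb) := by
  obtain ⟨γa, hga0, hgar, hgac, hoa⟩ := coupling_exists k ηa ρa h1 h2
  obtain ⟨γb, hgb0, hgbr, hgbc, hob⟩ := coupling_exists k ηb ρb h3 h4
  apply Real.sSup_le
  · rintro v ⟨η, hη, hmA, hmB, rfl⟩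
    obtain ⟨ρ, hρ, hρA, hρB, hbd⟩ :=
      transport k η hη ηa ηb ρa ρb γa γb hmA hmB hga0 hgar hgac hgb0 hgbr hgbc
    have hmem : qLow k r ρ ∈
        {v | ∃ η, IsJoint k η ∧ margA k η = ρa ∧ margB k η = ρb ∧ v = qLow k r η} :=
      ⟨ρ, hρ, hρA, hρB, rfl⟩
    have hle : qLow k r ρ ≤ nuL k r ρa ρb := le_csSup (SL_bddAbove k r ρa ρb) hmem
    have hb2 := hbd (fun x y => ((x : ℕ) : ℝ) - ((y : ℕ) : ℝ) < r) (fun x y => inferInstance)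
    have heq : qLow k r ρ - qLow k r η =
        (∑ x : Fin k, ∑ y : Fin k, if ((x : ℕ) : ℝ) - ((y : ℕ) : ℝ) < r then ρ x y else 0) -
        (∑ x : Fin k, ∑ y : Fin k, if ((x : ℕ) : ℝ) - ((y : ℕ) : ℝ) < r then η x y else 0) := rfl
    rw [← heq] at hb2
    obtain ⟨hlo, hup⟩ := abs_le.mp hb2
    have hdle : (∑ x, ∑ x', if x = x' then (0:ℝ) else γa x x') +
        (∑ y, ∑ y', if y = y' then (0:ℝ) else γb y y') ≤ dTV k ηa ρa + dTV k ηb ρb := by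
      linarith
    linarith
  · have := nuL_nonneg k r ρa ρb h2 h4
    have := dTV_nonneg k ηa ρa
    have := dTV_nonneg k ηb ρb
    linarith

lemma nuL_abs (k : ℕ) (r : ℝ) (ηa ηb ρa ρb : Fin k → ℝ)
    (h1 : IsDist k ηa) (h2 : IsDist k ρa) (h3 : IsDist k ηb) (h4 : IsDist k ρb) :
    |nuL k r ηa ηb - nuL k r ρa ρb| ≤ dTV k ηa ρa + dTV k ηb ρb := by
  rw [abs_sub_le_iff]
  constructor
  · linarith [nuL_one_sided k r ηa ηb ρa ρb h1 h2 h3 h4]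
  · have := nuL_one_sided k r ρa ρb ηa ηb h2 h1 h4 h3
    rw [dTV_symm k ρa ηa, dTV_symm k ρb ηb] at this
    linarith

lemma nuU_one_sided (k : ℕ) (r : ℝ) (ηa ηb ρa ρb : Fin k → ℝ)
    (h1 : IsDist k ηa) (h2 : IsDist k ρa) (h3 : IsDist k ηb) (h4 : IsDist k ρb) :
    nuU k r ρa ρb ≤ nuU k r ηa ηb + (dTV k ηa ρa + dTV k ηb ρb) := by
  obtain ⟨γa, hga0, hgar, hgac, hoa⟩ := coupling_exists k ηa ρa h1 h2
  obtain ⟨γb, hgb0, hgbr, hgbc, hob⟩ := coupling_exists k ηb ρb h3 h4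
  have hne : {v | ∃ η, IsJoint k η ∧ margA k η = ηa ∧ margB k η = ηb ∧
      v = qUp k r η}.Nonempty := by
    obtain ⟨η, hη, hA, hB⟩ := indep_joint k ηa ηb h1 h3
    exact ⟨qUp k r η, η, hη, hA, hB, rfl⟩
  have key : ∀ v ∈ {v | ∃ η, IsJoint k η ∧ margA k η = ηa ∧ margB k η = ηb ∧
      v = qUp k r η}, nuU k r ρa ρb - (dTV k ηa ρa + dTV k ηb ρb) ≤ v := by
    rintro v ⟨η, hη, hmA, hmB, rfl⟩
    obtain ⟨ρ, hρ, hρA, hρB, hbd⟩ :=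
      transport k η hη ηa ηb ρa ρb γa γb hmA hmB hga0 hgar hgac hgb0 hgbr hgbc
    have hmem : qUp k r ρ ∈
        {v | ∃ η, IsJoint k η ∧ margA k η = ρa ∧ margB k η = ρb ∧ v = qUp k r η} :=
      ⟨ρ, hρ, hρA, hρB, rfl⟩
    have hle : nuU k r ρa ρb ≤ qUp k r ρ := csInf_le (SU_bddBelow k r ρa ρb) hmem
    have hb2 := hbd (fun x y => ((x : ℕ) : ℝ) - ((y : ℕ) : ℝ) ≤ r) (fun x y => inferInstance)
    have heq : qUp k r ρ - qUp k r η =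
        (∑ x : Fin k, ∑ y : Fin k, if ((x : ℕ) : ℝ) - ((y : ℕ) : ℝ) ≤ r then ρ x y else 0) -
        (∑ x : Fin k, ∑ y : Fin k, if ((x : ℕ) : ℝ) - ((y : ℕ) : ℝ) ≤ r then η x y else 0) := rfl
    rw [← heq] at hb2
    obtain ⟨hlo, hup⟩ := abs_le.mp hb2
    linarith
  have h := le_csInf hne key
  have h2 : nuU k r ρa ρb - (dTV k ηa ρa + dTV k ηb ρb) ≤ nuU k r ηa ηb := h
  linarith

lemma nuU_abs (k : ℕ) (r : ℝ) (ηa ηb ρa ρb : Fin k → ℝ)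
    (h1 : IsDist k ηa) (h2 : IsDist k ρa) (h3 : IsDist k ηb) (h4 : IsDist k ρb) :
    |nuU k r ηa ηb - nuU k r ρa ρb| ≤ dTV k ηa ρa + dTV k ηb ρb := by
  rw [abs_sub_le_iff]
  constructor
  · have := nuU_one_sided k r ρa ρb ηa ηb h2 h1 h4 h3
    rw [dTV_symm k ρa ηa, dTV_symm k ρb ηb] at this
    linarith
  · linarith [nuU_one_sided k r ηa ηb ρa ρb h1 h2 h3 h4]

lemma width_abs (k : ℕ) (r : ℝ) (ηa ηb ρa ρb : Fin k → ℝ)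
    (h1 : IsDist k ηa) (h2 : IsDist k ρa) (h3 : IsDist k ηb) (h4 : IsDist k ρb) :
    |widthOf k r ηa ηb - widthOf k r ρa ρb| ≤ dTV k ηa ρa + dTV k ηb ρb := by
  have hL := nuL_abs k r ηa ηb ρa ρb h1 h2 h3 h4
  have hU := nuU_abs k r ηa ηb ρa ρb h1 h2 h3 h4
  unfold widthOf
  refine le_trans (abs_max_sub_max_le_max _ _ _ _) ?_
  rw [max_le_iff]
  constructor
  · refine le_trans (abs_max_sub_max_le_max _ _ _ _) ?_
    rw [max_le_iff]
    constructor
    · have : nuL k r ηa ηb - 1/2 - (nuL k r ρa ρb - 1/2) = nuL k r ηa ηb - nuL k r ρa ρb := by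
        ring
      rw [this]
      exact hL
    · simp [dTV_nonneg k ηa ρa, dTV_nonneg k ηb ρb]
      linarith [dTV_nonneg k ηa ρa, dTV_nonneg k ηb ρb]
  · refine le_trans (abs_max_sub_max_le_max _ _ _ _) ?_
    rw [max_le_iff]
    constructor
    · have : 1/2 - nuU k r ηa ηb - (1/2 - nuU k r ρa ρb) = -(nuU k r ηa ηb - nuU k r ρa ρb) := by
        ring
      rw [this, abs_neg]
      exact hU
    · simp
      linarith [dTV_nonneg k ηa ρa, dTV_nonneg k ηb ρb]

lemma width_nonneg (k : ℕ) (r : ℝ) (a b : Fin k → ℝ) : 0 ≤ widthOf k r a b :=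
  le_trans (le_max_right _ 0) (le_max_left _ _)
theorem stmt16 (k : ℕ) (ηa ρa ηb ρb : Fin k → ℝ)
    (h1 : IsDist k ηa) (h2 : IsDist k ρa) (h3 : IsDist k ηb) (h4 : IsDist k ρb)
    (δ : ℝ) (hda : dTV k ηa ρa ≤ δ) (hdb : dTV k ηb ρb ≤ δ) :
    |epsStar k ηa ηb - epsStar k ρa ρb| ≤ 2 * δ := by
  rcases Nat.eq_zero_or_pos k with hk | hk
  · subst hk
    obtain ⟨_, hsum⟩ := h1
    simp at hsum
  have hk1 : (1 : ℤ) ≤ (k : ℤ) := by exact_mod_cast hk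
  set E1 := {e | ∃ r : ℤ, -((k : ℤ) - 1) ≤ r ∧ r ≤ (k : ℤ) - 1 ∧ e = widthOf k (r : ℝ) ηa ηb}
    with hE1
  set E2 := {e | ∃ r : ℤ, -((k : ℤ) - 1) ≤ r ∧ r ≤ (k : ℤ) - 1 ∧ e = widthOf k (r : ℝ) ρa ρb}
    with hE2
  have hne1 : E1.Nonempty := ⟨widthOf k 0 ηa ηb, 0, by omega, by omega, by norm_num⟩
  have hne2 : E2.Nonempty := ⟨widthOf k 0 ρa ρb, 0, by omega, by omega, by norm_num⟩
  have hbb1 : BddBelow E1 := ⟨0, by rintro e ⟨r, _, _, rfl⟩; exact width_nonneg k _ ηa ηb⟩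
  have hbb2 : BddBelow E2 := ⟨0, by rintro e ⟨r, _, _, rfl⟩; exact width_nonneg k _ ρa ρb⟩
  have hw : ∀ r : ℝ, |widthOf k r ηa ηb - widthOf k r ρa ρb| ≤ 2 * δ := by
    intro r
    refine le_trans (width_abs k r ηa ηb ρa ρb h1 h2 h3 h4) ?_
    linarith
  have key12 : sInf E1 ≤ sInf E2 + 2 * δ := by
    have hlb : ∀ e ∈ E2, sInf E1 - 2 * δ ≤ e := by
      rintro e ⟨r, hr1, hr2, rfl⟩
      have hmem : widthOf k (r : ℝ) ηa ηb ∈ E1 := ⟨r, hr1, hr2, rfl⟩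
      have h := csInf_le hbb1 hmem
      have := abs_le.mp (hw (r : ℝ))
      linarith [this.1, this.2]
    have := le_csInf hne2 hlb
    linarith
  have key21 : sInf E2 ≤ sInf E1 + 2 * δ := by
    have hlb : ∀ e ∈ E1, sInf E2 - 2 * δ ≤ e := by
      rintro e ⟨r, hr1, hr2, rfl⟩
      have hmem : widthOf k (r : ℝ) ρa ρb ∈ E2 := ⟨r, hr1, hr2, rfl⟩
      have h := csInf_le hbb2 hmem
      have := abs_le.mp (hw (r : ℝ))
      linarith [this.1, this.2]
    have := le_csInf hne1 hlb
    linarith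
  have he1 : epsStar k ηa ηb = sInf E1 := rfl
  have he2 : epsStar k ρa ρb = sInf E2 := rfl
  rw [he1, he2, abs_sub_le_iff]
  constructor <;> linarith
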